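/- Let p ≡ 1 (mod 3) be prime, ρ a character of F_p* of order 3, and write p = (c² + 3d²)/4 with c ≡ 1 (mod 3) the trace of Frobenius of y² + y = x³. Then the p-th Fourier coefficient b(p) of η(3z)⁸ satisfies b(p) = c³ − 3pc, and equals −p³·[(ρ choose ρ²)³ + (ρ² choose ρ)³]. -/

import Mathlib

section aux

variable {p : ℕ} [Fact p.Prime]

-- ρ(-1) = 1 for a cubic character
lemma rho_neg_one (ρ : MulChar (ZMod p) ℂ) (hρ : orderOf ρ = 3) : ρ (-1) = 1 := by
  have h3 : ρ ^ 3 = 1 := by rw [← hρ]; exact pow_orderOf_eq_one ρ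
  have hu : IsUnit (-1 : ZMod p) := IsUnit.neg isUnit_one
  have h2 : ρ (-1) * ρ (-1) = 1 := by
    rw [← map_mul]; norm_num
  have hcube : ρ (-1) ^ 3 = 1 := by
    rw [← MulChar.pow_apply' ρ (by norm_num : (3:ℕ) ≠ 0), h3, MulChar.one_apply hu]
  have : ρ (-1) ^ 3 = ρ (-1) * (ρ (-1) * ρ (-1)) := by ring
  rw [this, h2, mul_one] at hcube
  exact hcube

lemma rho_ne_one (ρ : MulChar (ZMod p) ℂ) (hρ : orderOf ρ = 3) : ρ ≠ 1 := by
  intro h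
  rw [h, orderOf_one] at hρ
  norm_num at hρ

lemma rho_sq_ne_one (ρ : MulChar (ZMod p) ℂ) (hρ : orderOf ρ = 3) : ρ * ρ ≠ 1 := by
  intro h
  have : orderOf ρ ∣ 2 := orderOf_dvd_of_pow_eq_one (by rw [pow_two]; exact h)
  rw [hρ] at this
  norm_num at this

end aux

section aux2
variable {p : ℕ} [Fact p.Prime]

lemma exists_cuberoot (ρ : MulChar (ZMod p) ℂ) (hρ : orderOf ρ = 3)
    {t : ZMod p} (ht : t ≠ 0) (h1 : ρ t = 1) : ∃ s : ZMod p, s ≠ 0 ∧ s ^ 3 = t := by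
  haveI : Fact (Nat.Prime 3) := ⟨by norm_num⟩
  have h3 : ρ ^ 3 = 1 := by rw [← hρ]; exact pow_orderOf_eq_one ρ
  obtain ⟨g, hg⟩ := IsCyclic.exists_generator (α := (ZMod p)ˣ)
  set a := ρ (g : ZMod p) with ha
  have hacube : a ^ 3 = 1 := by
    rw [ha, ← MulChar.pow_apply' ρ (by norm_num : (3:ℕ) ≠ 0), h3, MulChar.one_apply_coe]
  have hane : a ≠ 1 := by
    intro haone
    apply rho_ne_one ρ hρ
    apply MulChar.ext
    intro u
    obtain ⟨m, hm⟩ := mem_powers_iff_mem_zpowers.mpr (hg u)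
    rw [MulChar.one_apply_coe, ← hm]
    push_cast
    rw [map_pow, ← ha, haone, one_pow]
  have hord : orderOf a = 3 := orderOf_eq_prime hacube hane
  have hu : IsUnit t := isUnit_iff_ne_zero.mpr ht
  obtain ⟨m, hm⟩ := mem_powers_iff_mem_zpowers.mpr (hg hu.unit)
  have htm : ((g : ZMod p)) ^ m = t := by
    rw [← Units.val_pow_eq_pow_val]
    simp only at hm
    rw [hm, IsUnit.unit_spec]
  have : a ^ m = 1 := by rw [ha, ← map_pow, htm, h1]
  have hdvd : 3 ∣ m := hord ▸ orderOf_dvd_of_pow_eq_one this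
  obtain ⟨k, rfl⟩ := hdvd
  refine ⟨(g : ZMod p) ^ k, ?_, ?_⟩
  · exact pow_ne_zero k (Units.ne_zero g)
  · rw [← pow_mul, mul_comm k 3, ← htm]
end aux2

section aux3
variable {p : ℕ} [Fact p.Prime]

lemma cube_count (hp3 : 3 < p) (ρ : MulChar (ZMod p) ℂ) (hρ : orderOf ρ = 3)
    (c d : ℤ) (hcd : 4 * (p : ℤ) = c ^ 2 + 3 * d ^ 2) (t : ZMod p) :
    ∑ z : ZMod p, (if z ^ 3 = t then (1:ℂ) else 0) = 1 + ρ t + (ρ t) ^ 2 := by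
  have hpp : p.Prime := Fact.out
  have h3 : ρ ^ 3 = 1 := by rw [← hρ]; exact pow_orderOf_eq_one ρ
  have h3z : (3 : ZMod p) ≠ 0 := by
    intro h
    have : p ∣ 3 := by
      have := (ZMod.natCast_eq_zero_iff 3 p).mp (by exact_mod_cast h)
      exact this
    have := Nat.le_of_dvd (by norm_num) this
    omega
  have h2z : (2 : ZMod p) ≠ 0 := by
    intro h
    have : p ∣ 2 := (ZMod.natCast_eq_zero_iff 2 p).mp (by exact_mod_cast h)
    have := Nat.le_of_dvd (by norm_num) this
    omega
  -- d is nonzero mod p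
  have hdz : (d : ZMod p) ≠ 0 := by
    intro h
    have hpd : (p : ℤ) ∣ d := (ZMod.intCast_zmod_eq_zero_iff_dvd d p).mp h
    have hpc2 : (p : ℤ) ∣ c ^ 2 := by
      have : c ^ 2 = 4 * p - 3 * d ^ 2 := by linarith
      rw [this]
      exact dvd_sub (Dvd.dvd.mul_left (dvd_refl _) 4) (Dvd.dvd.mul_left (hpd.pow (by norm_num)) 3)
    have hpc : (p : ℤ) ∣ c := (Int.Prime.dvd_pow' (by exact_mod_cast hpp) hpc2 : _)
    obtain ⟨c', rfl⟩ := hpc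
    obtain ⟨d', rfl⟩ := hpd
    have h4 : (p : ℤ) ∣ 4 := by
      have hp0 : (p : ℤ) ≠ 0 := by exact_mod_cast hpp.ne_zero
      have : (p:ℤ) * 4 = (p:ℤ) * ((p:ℤ) * (c' ^ 2 + 3 * d' ^ 2)) := by ring_nf; ring_nf at hcd; linarith
      have h44 : (4 : ℤ) = (p:ℤ) * (c' ^ 2 + 3 * d' ^ 2) := by
        exact mul_left_cancel₀ hp0 this
      exact ⟨_, h44⟩
    have hd4 : p ∣ 4 := by exact_mod_cast h4
    have := Nat.le_of_dvd (by norm_num) hd4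
    have hp4 : p = 4 := by omega
    rw [hp4] at hpp
    norm_num at hpp
  -- a square root of -3
  set r : ZMod p := (c : ZMod p) * (d : ZMod p)⁻¹ with hr
  have hcast : ((c : ZMod p)) ^ 2 + 3 * ((d : ZMod p)) ^ 2 = 0 := by
    have := congrArg (Int.cast : ℤ → ZMod p) hcd
    push_cast at this
    rw [ZMod.natCast_self] at this
    linear_combination -this
  have hr2 : r ^ 2 = -3 := by
    rw [hr]
    field_simp
    linear_combination hcast
  have hrne : r ≠ 0 := by
    intro h
    rw [h] at hr2
    simp at hr2
    exact h3z hr2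
  set w₁ : ZMod p := (-1 + r) * (2 : ZMod p)⁻¹ with hw1
  set w₂ : ZMod p := (-1 - r) * (2 : ZMod p)⁻¹ with hw2
  have hsum : w₁ + w₂ = -1 := by
    rw [hw1, hw2]
    field_simp
    ring
  have hprod : w₁ * w₂ = 1 := by
    rw [hw1, hw2]
    field_simp
    linear_combination -hr2
  have hwne : w₁ ≠ w₂ := by
    intro h
    rw [hw1, hw2] at h
    have h' : (-1 + r : ZMod p) = -1 - r := mul_right_cancel₀ (inv_ne_zero h2z) h
    have h2r : (2 : ZMod p) * r = 0 := by linear_combination h'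
    rcases mul_eq_zero.mp h2r with h2 | hr0
    · exact h2z h2
    · exact hrne hr0
  have hw1ne : w₁ ≠ 1 := by
    intro h
    have : w₂ = -2 := by linear_combination hsum - h  -- w₂ = -1 - w₁ = -2
    rw [h, this] at hprod
    exact h3z (by linear_combination -hprod)
  have hw2ne : w₂ ≠ 1 := by
    intro h
    have : w₁ = -2 := by linear_combination hsum - h
    rw [h, this] at hprod
    exact h3z (by linear_combination -hprod)
  by_cases ht : t = 0
  · subst ht
    have hz : ∀ z : ZMod p, z ^ 3 = (0 : ZMod p) ↔ z = 0 := by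
      intro z
      exact pow_eq_zero_iff (by norm_num)
    simp only [hz]
    rw [Finset.sum_ite_eq' Finset.univ (0 : ZMod p) (fun _ => (1:ℂ))]
    simp [MulChar.map_zero]
  · by_cases hρt : ρ t = 1
    · obtain ⟨s, hs0, hs3⟩ := exists_cuberoot ρ hρ ht hρt
      have key : ∀ z : ZMod p, (z - s) * (z - s * w₁) * (z - s * w₂) = z ^ 3 - t := by
        intro z
        linear_combination (-s * z ^ 2 + s ^ 2 * z) * hsum + (s ^ 2 * z - s ^ 3) * hprod - hs3
      have hset : ∀ z : ZMod p, z ^ 3 = t ↔ z ∈ ({s, s * w₁, s * w₂} : Finset (ZMod p)) := by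
        intro z
        constructor
        · intro hz
          have h0 : (z - s) * (z - s * w₁) * (z - s * w₂) = 0 := by rw [key z, hz, sub_self]
          simp only [Finset.mem_insert, Finset.mem_singleton]
          rcases mul_eq_zero.mp h0 with h | h
          · rcases mul_eq_zero.mp h with h | h
            · exact Or.inl (sub_eq_zero.mp h)
            · exact Or.inr (Or.inl (sub_eq_zero.mp h))
          · exact Or.inr (Or.inr (sub_eq_zero.mp h))
        · intro hz
          simp only [Finset.mem_insert, Finset.mem_singleton] at hz
          have h0 : (z - s) * (z - s * w₁) * (z - s * w₂) = 0 := by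
            rcases hz with rfl | rfl | rfl
            · rw [sub_self, zero_mul, zero_mul]
            · rw [sub_self, mul_zero, zero_mul]
            · rw [sub_self, mul_zero]
          rw [key z] at h0
          exact sub_eq_zero.mp h0
      have hcard : ({s, s * w₁, s * w₂} : Finset (ZMod p)).card = 3 := by
        rw [Finset.card_insert_of_notMem, Finset.card_insert_of_notMem, Finset.card_singleton]
        · simp only [Finset.mem_singleton]
          intro h
          exact hwne (mul_left_cancel₀ hs0 h)
        · simp only [Finset.mem_insert, Finset.mem_singleton]
          push_neg
          constructor
          · intro h
            exact hw1ne (mul_left_cancel₀ hs0 (by rw [← h, mul_one])).symm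
          · intro h
            exact hw2ne (mul_left_cancel₀ hs0 (by rw [← h, mul_one])).symm
      simp only [hset]
      rw [Finset.sum_ite_mem, Finset.univ_inter, Finset.sum_const, hcard, hρt]
      norm_num
    · have hρt3 : (ρ t) ^ 3 = 1 := by
        rw [← MulChar.pow_apply' ρ (by norm_num : (3:ℕ) ≠ 0), h3,
          MulChar.one_apply (isUnit_iff_ne_zero.mpr ht)]
      have hrhs : 1 + ρ t + (ρ t) ^ 2 = 0 := by
        have hfac : (ρ t - 1) * (1 + ρ t + (ρ t) ^ 2) = 0 := by
          linear_combination hρt3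
        rcases mul_eq_zero.mp hfac with h | h
        · exact absurd (by linear_combination h) hρt
        · exact h
      rw [hrhs]
      apply Finset.sum_eq_zero
      intro z _
      rw [if_neg]
      intro hz
      have hz0 : z ≠ 0 := by
        intro h
        rw [h] at hz
        simp at hz
        exact ht hz.symm
      apply hρt
      rw [← hz, map_pow, ← MulChar.pow_apply' ρ (by norm_num : (3:ℕ) ≠ 0), h3,
        MulChar.one_apply (isUnit_iff_ne_zero.mpr hz0)]
end aux3

section aux4
variable {p : ℕ} [Fact p.Prime]

lemma curve_count (hp3 : 3 < p) (ρ : MulChar (ZMod p) ℂ) (hρ : orderOf ρ = 3)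
    (c d : ℤ) (hcd : 4 * (p : ℤ) = c ^ 2 + 3 * d ^ 2) :
    ((Nat.card {P : ZMod p × ZMod p // P.2 ^ 2 + P.2 = P.1 ^ 3}) : ℂ)
      = p + jacobiSum ρ ρ + jacobiSum (ρ ^ 2) (ρ ^ 2) := by
  have e : {P : ZMod p × ZMod p // P.2 ^ 2 + P.2 = P.1 ^ 3} ≃
      {Q : ZMod p × ZMod p // Q.2 ^ 3 = Q.1 * (1 - Q.1)} :=
    { toFun := fun P => ⟨(P.1.2 + 1, -P.1.1), by
        have h := P.2
        linear_combination h⟩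
      invFun := fun Q => ⟨(-Q.1.2, Q.1.1 - 1), by
        have h := Q.2
        linear_combination h⟩
      left_inv := fun P => by
        apply Subtype.ext
        apply Prod.ext <;> simp
      right_inv := fun Q => by
        apply Subtype.ext
        apply Prod.ext <;> simp }
  rw [Nat.card_congr e, Nat.card_eq_fintype_card, Fintype.card_subtype]
  rw [Finset.card_filter]
  push_cast
  rw [Fintype.sum_prod_type]
  have step : ∀ x : ZMod p, ∑ z : ZMod p, (if z ^ 3 = x * (1 - x) then (1:ℂ) else 0)
      = 1 + ρ (x * (1 - x)) + (ρ (x * (1 - x))) ^ 2 :=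
    fun x => cube_count hp3 ρ hρ c d hcd (x * (1 - x))
  calc (∑ x : ZMod p, ∑ z : ZMod p, if ((x, z) : ZMod p × ZMod p).2 ^ 3 =
          ((x, z) : ZMod p × ZMod p).1 * (1 - ((x, z) : ZMod p × ZMod p).1) then (1:ℂ) else 0)
      = ∑ x : ZMod p, (1 + ρ (x * (1 - x)) + (ρ (x * (1 - x))) ^ 2) := by
        exact Finset.sum_congr rfl fun x _ => step x
    _ = (p : ℂ) + jacobiSum ρ ρ + jacobiSum (ρ ^ 2) (ρ ^ 2) := by
        rw [Finset.sum_add_distrib, Finset.sum_add_distrib, Finset.sum_const, Finset.card_univ,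
          ZMod.card, nsmul_eq_mul, mul_one]
        congr 1
        · congr 1
          simp only [jacobiSum, map_mul]
        · simp only [jacobiSum, map_mul]
          apply Finset.sum_congr rfl
          intro x _
          rw [MulChar.pow_apply' ρ (by norm_num : (2:ℕ) ≠ 0),
            MulChar.pow_apply' ρ (by norm_num : (2:ℕ) ≠ 0)]
          ring
end aux4



/-- Greene's normalized Jacobi sum `(A choose B) = B(−1)/p · J(A, B̄)`. -/
noncomputable def jbinom {F : Type*} [Field F] [Fintype F] (A B : MulChar F ℂ) : ℂ :=
  B (-1) / (Fintype.card F : ℂ) * ∑ x : F, A x * B⁻¹ (1 - x)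

/-- Let `p ≡ 1 (mod 3)` be prime, `ρ` a cubic character of `F_p*`, and `c ≡ 1 (mod 3)` the trace
of Frobenius of `y² + y = x³` with `4p = c² + 3d²`. The `p`-th Fourier coefficient of `η(3z)⁸`,
given by `b(p) = α³ + ᾱ³` for the Frobenius eigenvalues `α, ᾱ` (so `α + ᾱ = c`, `αᾱ = p`),
satisfies `b(p) = c³ − 3pc = −p³·[(ρ choose ρ²)³ + (ρ² choose ρ)³]`. -/
theorem eta_coefficient_jacobi (p : ℕ) [Fact p.Prime] (hp3 : 3 < p) (h1 : p % 3 = 1)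
    (ρ : MulChar (ZMod p) ℂ) (hρ : orderOf ρ = 3)
    (c d : ℤ) (hcd : 4 * (p : ℤ) = c ^ 2 + 3 * d ^ 2) (hc3 : c % 3 = 1)
    (hc : c = (p : ℤ) + 1 -
      (1 + (Nat.card {P : ZMod p × ZMod p // P.2 ^ 2 + P.2 = P.1 ^ 3} : ℤ)))
    (α : ℂ) (hα1 : α + (starRingEnd ℂ) α = (c : ℂ)) (hα2 : α * (starRingEnd ℂ) α = (p : ℂ))
    (b : ℂ) (hb : b = α ^ 3 + ((starRingEnd ℂ) α) ^ 3) :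
    b = (c : ℂ) ^ 3 - 3 * (p : ℂ) * (c : ℂ) ∧
      b = -(p : ℂ) ^ 3 * ((jbinom ρ (ρ ^ 2)) ^ 3 + (jbinom (ρ ^ 2) ρ) ^ 3) := by
  have hpp : p.Prime := Fact.out
  have hp0 : (p : ℂ) ≠ 0 := Nat.cast_ne_zero.mpr hpp.ne_zero
  have h3 : ρ ^ 3 = 1 := by rw [← hρ]; exact pow_orderOf_eq_one ρ
  set J := jacobiSum ρ ρ with hJ
  set J2 := jacobiSum (ρ ^ 2) (ρ ^ 2) with hJ2
  have part1 : b = (c : ℂ) ^ 3 - 3 * (p : ℂ) * (c : ℂ) := by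
    rw [hb, ← hα1, ← hα2]; ring
  have hinv : ρ⁻¹ = ρ ^ 2 := inv_eq_of_mul_eq_one_left (by rw [← pow_succ]; exact h3)
  have hinv2 : (ρ ^ 2)⁻¹ = ρ := inv_eq_of_mul_eq_one_left (by rw [← pow_succ']; exact h3)
  have hneg : ρ (-1) = 1 := rho_neg_one ρ hρ
  have hneg2 : (ρ ^ 2) (-1) = 1 := by
    rw [MulChar.pow_apply' ρ (by norm_num : (2:ℕ) ≠ 0), hneg, one_pow]
  have hjb1 : jbinom ρ (ρ ^ 2) = J / (p : ℂ) := by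
    simp only [jbinom, hinv2, hneg2, ZMod.card, hJ, jacobiSum]
    ring
  have hjb2 : jbinom (ρ ^ 2) ρ = J2 / (p : ℂ) := by
    simp only [jbinom, hinv, hneg, ZMod.card, hJ2, jacobiSum]
    ring
  have hJJ : J * J2 = (p : ℂ) := by
    have hne : ρ ≠ 1 := rho_ne_one ρ hρ
    have hchar : ringChar ℂ ≠ ringChar (ZMod p) := by
      rw [ringChar.eq_zero, ZMod.ringChar_zmod_n]
      exact fun h => hpp.ne_zero h.symm
    have h := jacobiSum_mul_jacobiSum_inv hchar hne hne (rho_sq_ne_one ρ hρ)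
    rw [hinv, ZMod.card] at h
    rw [hJ, hJ2]
    rw [sq] at h ⊢
    exact_mod_cast h
  have hcount := curve_count hp3 ρ hρ c d hcd
  have hcc : J + J2 = -(c : ℂ) := by
    have hcast := congrArg (Int.cast : ℤ → ℂ) hc
    push_cast at hcast
    rw [hcount] at hcast
    linear_combination hcast
  refine ⟨part1, ?_⟩
  rw [hjb1, hjb2]
  have expand : -(p : ℂ) ^ 3 * ((J / p) ^ 3 + (J2 / p) ^ 3) = -(J ^ 3 + J2 ^ 3) := by
    field_simp
  rw [expand]
  linear_combination part1 + ((J + J2) ^ 2 - (J + J2) * (c:ℂ) + (c:ℂ) ^ 2 - 3 * (J * J2)) * hcc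
    + 3 * (c:ℂ) * hJJ
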